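/- The optimal value of the following semidefinite program equals 1; i.e., Bob can cheat perfectly in the stochastic-switch strong coin flipping protocol: maximize ⟨τ, Q'⟩ over density matrices τ₀ on C ⊗ Y ⊗ A₀ ⊗ A₁ ⊗ B₁ ⊗ G = ℂ² ⊗ ℂ² ⊗ ℂ³ ⊗ ℂ³ ⊗ ℂ³ ⊗ ℂ² and τ on C ⊗ Y ⊗ A₀ ⊗ A₁ ⊗ Z ⊗ G = ℂ² ⊗ ℂ² ⊗ ℂ³ ⊗ ℂ³ ⊗ ℂ² ⊗ ℂ², subject to Tr_{C,G}(τ₀) = Tr_{B₀}(|ψ⟩⟨ψ|) and Tr_Z(τ) = Tr_{B₁}(τ₀), where |ψ⟩ = Σ_{y∈{0,1}} (1/√2)|y⟩_Y ⊗ |φ_y⟩_{A₀⊗B₀} ⊗ |φ_y⟩_{A₁⊗B₁}, and Q' = |0⟩⟨0|_C ⊗ Σ_{y∈{0,1}} |y⟩⟨y|_Y ⊗ 1_{A₀} ⊗ 1_{A₁} ⊗ 1_Z ⊗ |y⟩⟨y|_G + |1⟩⟨1|_C ⊗ [1_Y ⊗ 1_{A₀} ⊗ |2⟩⟨2|_{A₁}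 ⊗ |0⟩⟨0|_Z ⊗ 1_G + 1_Y ⊗ |2⟩⟨2|_{A₀} ⊗ 1_{A₁} ⊗ |1⟩⟨1|_Z ⊗ 1_G]. In particular, there exist feasible τ₀, τ with ⟨τ, Q'⟩ = 1 (Bob measures the received qutrit in the computational basis and, conditioned on the outcome, either learns y perfectly in the commitment branch or forces outcome 1 in the weak-coin-flipping branch). -/

import Mathlib

/-! STATEMENT 18: In the stochastic-switch strong coin flipping protocol, Bob can cheat perfectly: the optimal value of his cheating SDP equals 1, and it is attained. -/

open Matrix
open scoped Matrix BigOperators ComplexOrder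

noncomputable section

/-- Square matrices over ℂ indexed by `α`. -/
abbrev Mat (α : Type) : Type := Matrix α α ℂ

/-- A density matrix: positive semidefinite with unit trace. -/
def IsDensity {α : Type} [Fintype α] [DecidableEq α] (ρ : Mat α) : Prop :=
  ρ.PosSemidef ∧ ρ.trace = 1

/-- Hilbert–Schmidt inner product ⟨P, Q⟩ = Tr(P† Q). -/
def hs {α : Type} [Fintype α] (P Q : Mat α) : ℂ := (Pᴴ * Q).trace

/-- Outer product |v⟩⟨v|. -/
def outer {α : Type} (v : α → ℂ) : Mat α := fun i j => v i * star (v j)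

/-- Standard basis vector |i⟩. -/
def ket {α : Type} [DecidableEq α] (i : α) : α → ℂ := fun j => if j = i then 1 else 0

/-- The embedding of Fin 2 into Fin 3. -/
def f23 (y : Fin 2) : Fin 3 := ⟨y.val, by omega⟩

/-- |φ_y⟩ = (|yy⟩ + |22⟩)/√2 ∈ ℂ³ ⊗ ℂ³. -/
def phi (y : Fin 2) : Fin 3 × Fin 3 → ℂ :=
  fun p => (ket (f23 y, f23 y) p + ket ((2 : Fin 3), (2 : Fin 3)) p) / (Real.sqrt 2 : ℂ)

/-- Partial trace over the first tensor factor. -/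
def ptrA {α β : Type} [Fintype α] (ρ : Mat (α × β)) : Mat β :=
  fun b b' => ∑ a, ρ (a, b) (a, b')

/-- The choice register C. -/
abbrev CI : Type := Fin 2

/-- Index for Y ⊗ A₀ ⊗ B₀ ⊗ A₁ ⊗ B₁. -/
abbrev I5 : Type := Fin 2 × Fin 3 × Fin 3 × Fin 3 × Fin 3

/-- |ψ⟩ = Σ_y (1/√2)|y⟩_Y ⊗ |φ_y⟩_{A₀⊗B₀} ⊗ |φ_y⟩_{A₁⊗B₁}. -/
def psiW : I5 → ℂ := fun p =>
  match p with
  | (y, a0, b0, a1, b1) => phi y (a0, b0) * phi y (a1, b1) / (Real.sqrt 2 : ℂ)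

/-- Partial trace over B₀, onto Y ⊗ A₀ ⊗ A₁ ⊗ B₁. -/
def trB0 (ρ : Mat I5) : Mat (Fin 2 × Fin 3 × Fin 3 × Fin 3) :=
  fun p q => ∑ b0,
    ρ (p.1, p.2.1, b0, p.2.2.1, p.2.2.2) (q.1, q.2.1, b0, q.2.2.1, q.2.2.2)

/-- Partial trace over C and G, the outer factors of C ⊗ Y ⊗ A₀ ⊗ A₁ ⊗ B₁ ⊗ G. -/
def trCG (τ : Mat (CI × Fin 2 × Fin 3 × Fin 3 × Fin 3 × Fin 2)) :
    Mat (Fin 2 × Fin 3 × Fin 3 × Fin 3) :=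
  fun p q => ∑ c, ∑ g,
    τ (c, p.1, p.2.1, p.2.2.1, p.2.2.2, g) (c, q.1, q.2.1, q.2.2.1, q.2.2.2, g)

/-- Partial trace over B₁, the fifth factor of C ⊗ Y ⊗ A₀ ⊗ A₁ ⊗ B₁ ⊗ G. -/
def trB1' (τ : Mat (CI × Fin 2 × Fin 3 × Fin 3 × Fin 3 × Fin 2)) :
    Mat (CI × Fin 2 × Fin 3 × Fin 3 × Fin 2) :=
  fun p q => ∑ b1,
    τ (p.1, p.2.1, p.2.2.1, p.2.2.2.1, b1, p.2.2.2.2)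
      (q.1, q.2.1, q.2.2.1, q.2.2.2.1, b1, q.2.2.2.2)

/-- Partial trace over Z, the fifth factor of C ⊗ Y ⊗ A₀ ⊗ A₁ ⊗ Z ⊗ G. -/
def trZ (τ : Mat (CI × Fin 2 × Fin 3 × Fin 3 × Fin 2 × Fin 2)) :
    Mat (CI × Fin 2 × Fin 3 × Fin 3 × Fin 2) :=
  fun p q => ∑ z,
    τ (p.1, p.2.1, p.2.2.1, p.2.2.2.1, z, p.2.2.2.2)
      (q.1, q.2.1, q.2.2.1, q.2.2.2.1, z, q.2.2.2.2)

/-- Q' = |0⟩⟨0|_C ⊗ Σ_y |y⟩⟨y|_Y ⊗ 1_{A₀} ⊗ 1_{A₁} ⊗ 1_Z ⊗ |y⟩⟨y|_G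
       + |1⟩⟨1|_C ⊗ [1_Y ⊗ 1_{A₀} ⊗ |2⟩⟨2|_{A₁} ⊗ |0⟩⟨0|_Z ⊗ 1_G
                   + 1_Y ⊗ |2⟩⟨2|_{A₀} ⊗ 1_{A₁} ⊗ |1⟩⟨1|_Z ⊗ 1_G]. -/
def Qscf : Mat (CI × Fin 2 × Fin 3 × Fin 3 × Fin 2 × Fin 2) := fun p q =>
  match p, q with
  | (c, y, a0, a1, z, g), (c', y', a0', a1', z', g') =>
    ket (0 : CI) c * star (ket (0 : CI) c') *
      (∑ u : Fin 2, ket u y * star (ket u y') *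
        (if a0 = a0' then 1 else 0) * (if a1 = a1' then 1 else 0) *
        (if z = z' then 1 else 0) * (ket u g * star (ket u g')))
    + ket (1 : CI) c * star (ket (1 : CI) c') *
      ((if y = y' then 1 else 0) * (if a0 = a0' then 1 else 0) *
        (ket (2 : Fin 3) a1 * star (ket (2 : Fin 3) a1')) *
        (ket (0 : Fin 2) z * star (ket (0 : Fin 2) z')) * (if g = g' then 1 else 0)
      + (if y = y' then 1 else 0) *
        (ket (2 : Fin 3) a0 * star (ket (2 : Fin 3) a0')) *
        (if a1 = a1' then 1 else 0) *
        (ket (1 : Fin 2) z * star (ket (1 : Fin 2) z')) * (if g = g' then 1 else 0))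

/-! ### Auxiliary development -/

section Aux

/-- Complex-valued indicator of a decidable proposition. -/
def indC (P : Prop) [Decidable P] : ℂ := if P then 1 else 0

@[simp] lemma star_boole (P : Prop) [Decidable P] :
    star (if P then (1:ℂ) else 0) = if P then 1 else 0 := by split <;> simp

@[simp] lemma star_indC (P : Prop) [Decidable P] : star (indC P) = indC P := by
  unfold indC; split <;> simp

@[simp] lemma indC_mul_indC (P Q : Prop) [Decidable P] [Decidable Q] :
    indC P * indC Q = indC (P ∧ Q) := by
  unfold indC; split <;> split <;> simp_all

lemma indC_congr {P Q : Prop} [Decidable P] [Decidable Q] (h : P ↔ Q) : indC P = indC Q := by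
  unfold indC; exact if_congr h rfl rfl

@[simp] lemma indC_and_self (P : Prop) [Decidable P] : indC (P ∧ P) = indC P :=
  indC_congr (and_self_iff)

lemma sum_indC {α : Type} [Fintype α] (P : α → Prop) [DecidablePred P] :
    ∑ a, indC (P a) = ((Finset.univ.filter P).card : ℂ) := by
  simp [indC, Finset.sum_boole]

/-- PSD of Gram matrices. -/
lemma gram_psd {α β : Type} [Fintype α] [Fintype β] (f : α → β → ℂ) :
    (Matrix.of fun p q => ∑ b, f p b * star (f q b) : Matrix α α ℂ).PosSemidef := by
  have h := Matrix.posSemidef_self_mul_conjTranspose (Matrix.of f)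
  have e : (Matrix.of f) * (Matrix.of f)ᴴ
      = Matrix.of fun p q => ∑ b, f p b * star (f q b) := by
    ext p q; simp [Matrix.mul_apply]
  rwa [e] at h

/-- The normalization constant 2√2. -/
def rr : ℂ := ((2 * Real.sqrt 2 : ℝ) : ℂ)

@[simp] lemma star_rr : star rr = rr := by simp [rr]

lemma rr_mul_rr : rr * rr = 8 := by
  rw [rr, ← Complex.ofReal_mul]
  have : (2 * Real.sqrt 2) * (2 * Real.sqrt 2) = 8 := by
    have h := Real.mul_self_sqrt (by norm_num : (0:ℝ) ≤ 2)
    nlinarith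
  rw [this]; norm_num

lemma chi_mul (P Q : Prop) [Decidable P] [Decidable Q] :
    (indC P / rr) * star (indC Q / rr) = indC (P ∧ Q) / 8 := by
  rw [star_div₀, star_indC, star_rr, div_mul_div_comm, indC_mul_indC, rr_mul_rr]

/-- The solvability predicate for φ: phi y (a,b) is nonzero iff this holds. -/
abbrev Pphi (y : Fin 2) (a b : Fin 3) : Prop := (a = f23 y ∧ b = f23 y) ∨ (a = 2 ∧ b = 2)

lemma phi_eq (y : Fin 2) (a b : Fin 3) :
    phi y (a, b) = indC (Pphi y a b) / ((Real.sqrt 2 : ℝ) : ℂ) := by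
  fin_cases y <;> fin_cases a <;> fin_cases b <;>
    simp [phi, ket, indC, Pphi, f23, Prod.ext_iff]

lemma psiW_eq (y : Fin 2) (a0 b0 a1 b1 : Fin 3) :
    psiW (y, a0, b0, a1, b1) = indC (Pphi y a0 b0 ∧ Pphi y a1 b1) / rr := by
  have h3 : ((Real.sqrt 2 : ℝ) : ℂ) * ((Real.sqrt 2 : ℝ) : ℂ) * ((Real.sqrt 2 : ℝ) : ℂ) = rr := by
    rw [rr, ← Complex.ofReal_mul, ← Complex.ofReal_mul]
    congr 1
    have h := Real.mul_self_sqrt (by norm_num : (0:ℝ) ≤ 2)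
    rw [h]
  show phi y (a0, b0) * phi y (a1, b1) / ((Real.sqrt 2 : ℝ) : ℂ) = _
  rw [phi_eq, phi_eq, div_mul_div_comm, indC_mul_indC, div_div, h3]

/-- Bob records `c = 0` (commitment branch) unless the qutrit reads `2`. -/
abbrev cbF (b0 : Fin 3) : CI := if b0 = 2 then 1 else 0
/-- Bob's guess register value. -/
abbrev gbF (b0 : Fin 3) : Fin 2 := if b0 = 1 then 1 else 0

/-- Support predicate of the cheating state τ₀. -/
abbrev PchiP (c : CI) (y : Fin 2) (a0 a1 b1 : Fin 3) (g : Fin 2) (b0 : Fin 3) : Prop :=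
  c = cbF b0 ∧ g = gbF b0 ∧ (Pphi y a0 b0 ∧ Pphi y a1 b1)

/-- Amplitudes of Bob's cheating state τ₀ (a Gram decomposition). -/
def chiF (p : CI × Fin 2 × Fin 3 × Fin 3 × Fin 3 × Fin 2) (b0 : Fin 3) : ℂ :=
  indC (PchiP p.1 p.2.1 p.2.2.1 p.2.2.2.1 p.2.2.2.2.1 p.2.2.2.2.2 b0) / rr

/-- Support predicate of the cheating state τ (z is set equal to c). -/
abbrev PxiP (c : CI) (y : Fin 2) (a0 a1 : Fin 3) (z g : Fin 2) (b : Fin 3 × Fin 3) : Prop :=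
  z = c ∧ PchiP c y a0 a1 b.2 g b.1

/-- Amplitudes of Bob's cheating state τ. -/
def xiF (p : CI × Fin 2 × Fin 3 × Fin 3 × Fin 2 × Fin 2) (b : Fin 3 × Fin 3) : ℂ :=
  indC (PxiP p.1 p.2.1 p.2.2.1 p.2.2.2.1 p.2.2.2.2.1 p.2.2.2.2.2 b) / rr

/-- Bob's optimal cheating state τ₀. -/
def tau0M : Mat (CI × Fin 2 × Fin 3 × Fin 3 × Fin 3 × Fin 2) :=
  Matrix.of fun p q => ∑ b0, chiF p b0 * star (chiF q b0)

/-- Bob's optimal cheating state τ. -/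
def tauBM : Mat (CI × Fin 2 × Fin 3 × Fin 3 × Fin 2 × Fin 2) :=
  Matrix.of fun p q => ∑ b, xiF p b * star (xiF q b)

/-- The winning event for Bob. -/
abbrev DpP (c : CI) (y : Fin 2) (a0 a1 : Fin 3) (z g : Fin 2) : Prop :=
  (c = 0 ∧ g = y) ∨ (c = 1 ∧ ((a1 = 2 ∧ z = 0) ∨ (a0 = 2 ∧ z = 1)))

/-- ℕ-valued shadow of the standard basis vector. -/
def ketN {α : Type} [DecidableEq α] (i : α) : α → ℕ := fun j => if j = i then 1 else 0

/-- ℕ-valued shadow of Q'. -/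
def QN : (CI × Fin 2 × Fin 3 × Fin 3 × Fin 2 × Fin 2) →
    (CI × Fin 2 × Fin 3 × Fin 3 × Fin 2 × Fin 2) → ℕ := fun p q =>
  match p, q with
  | (c, y, a0, a1, z, g), (c', y', a0', a1', z', g') =>
    ketN (0 : CI) c * ketN (0 : CI) c' *
      (∑ u : Fin 2, ketN u y * ketN u y' *
        (if a0 = a0' then 1 else 0) * (if a1 = a1' then 1 else 0) *
        (if z = z' then 1 else 0) * (ketN u g * ketN u g'))
    + ketN (1 : CI) c * ketN (1 : CI) c' *
      ((if y = y' then 1 else 0) * (if a0 = a0' then 1 else 0) *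
        (ketN (2 : Fin 3) a1 * ketN (2 : Fin 3) a1') *
        (ketN (0 : Fin 2) z * ketN (0 : Fin 2) z') * (if g = g' then 1 else 0)
      + (if y = y' then 1 else 0) *
        (ketN (2 : Fin 3) a0 * ketN (2 : Fin 3) a0') *
        (if a1 = a1' then 1 else 0) *
        (ketN (1 : Fin 2) z * ketN (1 : Fin 2) z') * (if g = g' then 1 else 0))

lemma Q_cast : ∀ p q, Qscf p q = ((QN p q : ℕ) : ℂ) := by
  rintro ⟨c, y, a0, a1, z, g⟩ ⟨c', y', a0', a1', z', g'⟩
  simp only [Qscf, QN, ket, ketN, star_boole]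
  push_cast
  ring

set_option maxRecDepth 1000000 in
set_option maxHeartbeats 4000000 in
lemma QNL : ∀ p q : CI × Fin 2 × Fin 3 × Fin 3 × Fin 2 × Fin 2,
    QN p q = if (p = q ∧ DpP p.1 p.2.1 p.2.2.1 p.2.2.2.1 p.2.2.2.2.1 p.2.2.2.2.2) then 1 else 0 := by
  decide

/-- Q' is the diagonal 0/1 matrix of the winning event. -/
lemma QL (p q : CI × Fin 2 × Fin 3 × Fin 3 × Fin 2 × Fin 2) :
    Qscf p q = indC (p = q ∧ DpP p.1 p.2.1 p.2.2.1 p.2.2.2.1 p.2.2.2.2.1 p.2.2.2.2.2) := by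
  rw [Q_cast, QNL p q]
  unfold indC
  split <;> simp

/-- The Hilbert–Schmidt pairing against Q' only sees the winning diagonal. -/
lemma hs_eq (M : Mat (CI × Fin 2 × Fin 3 × Fin 3 × Fin 2 × Fin 2)) :
    hs M Qscf = ∑ j, indC (DpP j.1 j.2.1 j.2.2.1 j.2.2.2.1 j.2.2.2.2.1 j.2.2.2.2.2)
      * star (M j j) := by
  unfold hs
  rw [Matrix.trace]
  simp only [Matrix.diag, Matrix.mul_apply, Matrix.conjTranspose_apply, QL]
  rw [Finset.sum_comm]
  refine Finset.sum_congr rfl fun j _ => ?_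
  have : ∀ i, star (M j i) * indC (j = i ∧ DpP j.1 j.2.1 j.2.2.1 j.2.2.2.1 j.2.2.2.2.1 j.2.2.2.2.2)
      = if j = i then indC (DpP j.1 j.2.1 j.2.2.1 j.2.2.2.1 j.2.2.2.2.1 j.2.2.2.2.2) * star (M j j) else 0 := by
    intro i
    by_cases h : j = i
    · subst h; simp [indC, mul_comm]
    · simp [indC, h]
  simp only [this]
  simp

end Aux
section Aux2

lemma collapseCG (v : CI) (w : Fin 2) (A B : Prop) [Decidable A] [Decidable B] :
    ∑ c : CI, ∑ g : Fin 2, indC ((c = v ∧ g = w ∧ A) ∧ (c = v ∧ g = w ∧ B)) = indC (A ∧ B) := by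
  simp only [Fin.sum_univ_two]
  by_cases hA : A <;> by_cases hB : B <;> fin_cases v <;> fin_cases w <;>
    simp [indC, hA, hB]

lemma collapseZ (v w : Fin 2) (A B : Prop) [Decidable A] [Decidable B] :
    ∑ z : Fin 2, indC ((z = v ∧ A) ∧ (z = w ∧ B)) = indC (v = w ∧ A ∧ B) := by
  rw [Fin.sum_univ_two]
  by_cases hA : A <;> by_cases hB : B <;> fin_cases v <;> fin_cases w <;>
    simp [indC, hA, hB]

set_option maxRecDepth 100000 in
lemma tau0_density : IsDensity tau0M := by
  refine ⟨gram_psd chiF, ?_⟩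
  rw [Matrix.trace]
  unfold Matrix.diag tau0M chiF
  simp only [Matrix.of_apply, chi_mul, indC_and_self]
  simp only [← Finset.sum_div]
  rw [← Fintype.sum_prod_type']
  rw [sum_indC]
  have hc : (Finset.univ.filter fun t : (CI × Fin 2 × Fin 3 × Fin 3 × Fin 3 × Fin 2) × Fin 3 =>
      PchiP t.1.1 t.1.2.1 t.1.2.2.1 t.1.2.2.2.1 t.1.2.2.2.2.1 t.1.2.2.2.2.2 t.2).card = 8 := by
    clear * -; decide
  rw [hc]; norm_num

set_option maxRecDepth 100000 in
lemma tauB_density : IsDensity tauBM := by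
  refine ⟨gram_psd xiF, ?_⟩
  rw [Matrix.trace]
  unfold Matrix.diag tauBM xiF
  simp only [Matrix.of_apply, chi_mul, indC_and_self]
  simp only [← Finset.sum_div]
  rw [← Fintype.sum_prod_type']
  rw [sum_indC]
  have hc : (Finset.univ.filter fun t : (CI × Fin 2 × Fin 3 × Fin 3 × Fin 2 × Fin 2) × (Fin 3 × Fin 3) =>
      PxiP t.1.1 t.1.2.1 t.1.2.2.1 t.1.2.2.2.1 t.1.2.2.2.2.1 t.1.2.2.2.2.2 t.2).card = 8 := by
    clear * -; decide
  rw [hc]; norm_num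

lemma constr1 : trCG tau0M = trB0 (outer psiW) := by
  funext p q
  obtain ⟨y, a0, a1, b1⟩ := p; obtain ⟨y', a0', a1', b1'⟩ := q
  unfold trCG trB0 outer tau0M chiF
  simp only [Matrix.of_apply, chi_mul, psiW_eq]
  simp only [← Finset.sum_div]
  congr 1
  calc ∑ c : CI, ∑ g : Fin 2, ∑ b0 : Fin 3,
        indC (PchiP c y a0 a1 b1 g b0 ∧ PchiP c y' a0' a1' b1' g b0)
      = ∑ c : CI, ∑ b0 : Fin 3, ∑ g : Fin 2,
        indC (PchiP c y a0 a1 b1 g b0 ∧ PchiP c y' a0' a1' b1' g b0) :=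
        Finset.sum_congr rfl fun c _ => Finset.sum_comm
    _ = ∑ b0 : Fin 3, ∑ c : CI, ∑ g : Fin 2,
        indC (PchiP c y a0 a1 b1 g b0 ∧ PchiP c y' a0' a1' b1' g b0) := Finset.sum_comm
    _ = ∑ b0 : Fin 3, indC ((Pphi y a0 b0 ∧ Pphi y a1 b1) ∧ (Pphi y' a0' b0 ∧ Pphi y' a1' b1')) :=
        Finset.sum_congr rfl fun b0 _ => collapseCG _ _ _ _

lemma constr2 : trZ tauBM = trB1' tau0M := by
  funext p q
  obtain ⟨c, y, a0, a1, g⟩ := p; obtain ⟨c', y', a0', a1', g'⟩ := q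
  unfold trZ trB1' tauBM tau0M xiF chiF
  simp only [Matrix.of_apply, chi_mul]
  simp only [← Finset.sum_div]
  congr 1
  calc ∑ z : Fin 2, ∑ b : Fin 3 × Fin 3,
        indC ((z = c ∧ PchiP c y a0 a1 b.2 g b.1) ∧ (z = c' ∧ PchiP c' y' a0' a1' b.2 g' b.1))
      = ∑ b : Fin 3 × Fin 3, ∑ z : Fin 2,
        indC ((z = c ∧ PchiP c y a0 a1 b.2 g b.1) ∧ (z = c' ∧ PchiP c' y' a0' a1' b.2 g' b.1)) :=
        Finset.sum_comm
    _ = ∑ b : Fin 3 × Fin 3,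
        indC (c = c' ∧ PchiP c y a0 a1 b.2 g b.1 ∧ PchiP c' y' a0' a1' b.2 g' b.1) :=
        Finset.sum_congr rfl fun b _ => collapseZ _ _ _ _
    _ = ∑ b : Fin 3 × Fin 3,
        indC (PchiP c y a0 a1 b.2 g b.1 ∧ PchiP c' y' a0' a1' b.2 g' b.1) :=
        Finset.sum_congr rfl fun b _ => indC_congr
          ⟨fun h => h.2, fun h => ⟨h.1.1.trans h.2.1.symm, h⟩⟩
    _ = ∑ b0 : Fin 3, ∑ b1 : Fin 3,
        indC (PchiP c y a0 a1 b1 g b0 ∧ PchiP c' y' a0' a1' b1 g' b0) :=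
        Fintype.sum_prod_type' (f := fun b0 b1 => indC (PchiP c y a0 a1 b1 g b0 ∧ PchiP c' y' a0' a1' b1 g' b0))
    _ = ∑ b1 : Fin 3, ∑ b0 : Fin 3,
        indC (PchiP c y a0 a1 b1 g b0 ∧ PchiP c' y' a0' a1' b1 g' b0) := Finset.sum_comm

set_option maxRecDepth 100000 in
set_option maxHeartbeats 1000000 in
lemma hs_tauB : hs tauBM Qscf = 1 := by
  rw [hs_eq]
  have hst : ∀ j, star (tauBM j j) = tauBM j j := fun j => (gram_psd xiF).1.apply j j
  simp only [hst]
  unfold tauBM xiF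
  simp only [Matrix.of_apply, chi_mul, indC_and_self]
  simp only [Finset.mul_sum, mul_div_assoc', indC_mul_indC]
  simp only [← Finset.sum_div]
  rw [← Fintype.sum_prod_type']
  rw [sum_indC]
  have hc : (Finset.univ.filter fun t : (CI × Fin 2 × Fin 3 × Fin 3 × Fin 2 × Fin 2) × (Fin 3 × Fin 3) =>
      DpP t.1.1 t.1.2.1 t.1.2.2.1 t.1.2.2.2.1 t.1.2.2.2.2.1 t.1.2.2.2.2.2 ∧
      PxiP t.1.1 t.1.2.1 t.1.2.2.1 t.1.2.2.2.1 t.1.2.2.2.2.1 t.1.2.2.2.2.2 t.2).card = 8 := by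
    clear * -; decide
  rw [hc]; norm_num

lemma hs_le (τ : Mat (CI × Fin 2 × Fin 3 × Fin 3 × Fin 2 × Fin 2)) (hd : IsDensity τ) :
    (hs τ Qscf).re ≤ 1 := by
  obtain ⟨hpsd, htr⟩ := hd
  have hst : ∀ j, star (τ j j) = τ j j := fun j => hpsd.1.apply j j
  have hnn : ∀ j, 0 ≤ (τ j j).re := by
    intro j
    have h := hpsd.dotProduct_mulVec_nonneg (Pi.single j 1)
    have he : star (Pi.single j 1 : _ → ℂ) ⬝ᵥ (τ *ᵥ Pi.single j 1) = τ j j := by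
      rw [Matrix.mulVec_single]
      simp [dotProduct, Pi.single_apply, apply_ite]
    rw [he] at h
    exact (Complex.le_def.mp h).1
  rw [hs_eq, Complex.re_sum]
  have hb : ∀ j ∈ Finset.univ, (indC (DpP j.1 j.2.1 j.2.2.1 j.2.2.2.1 j.2.2.2.2.1 j.2.2.2.2.2)
      * star (τ j j)).re ≤ (τ j j).re := by
    intro j _
    rw [hst j]
    unfold indC
    split
    · simp
    · simpa using hnn j
  calc _ ≤ ∑ j, (τ j j).re := Finset.sum_le_sum hb
    _ = (τ.trace).re := by rw [Matrix.trace, Complex.re_sum]; rfl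
    _ = 1 := by rw [htr]; simp

end Aux2
theorem scf_switch_cheating_Bob_perfect :
    IsGreatest
      {x : ℝ | ∃ (τ0 : Mat (CI × Fin 2 × Fin 3 × Fin 3 × Fin 3 × Fin 2))
          (τ : Mat (CI × Fin 2 × Fin 3 × Fin 3 × Fin 2 × Fin 2)),
        IsDensity τ0 ∧ IsDensity τ ∧
        trCG τ0 = trB0 (outer psiW) ∧
        trZ τ = trB1' τ0 ∧
        x = (hs τ Qscf).re}
      1 := by
  constructor
  · exact ⟨tau0M, tauBM, tau0_density, tauB_density, constr1, constr2,
      by rw [hs_tauB]; simp⟩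
  · rintro x ⟨τ0, τ, hd0, hd, -, -, rfl⟩
    exact hs_le τ hd

end
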